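/- Suppose the block-exchangeable correlation matrix C^n (diagonal blocks exchangeable with parameters α_1, α_3 ∈ [0,1), off-block constant α_2) is positive definite for all n with q_n → ∞ and r_n = p_n − q_n → ∞. If |C^n_{21}(C^n_{11})^{-1} sign(β_{(1)})| ≥ 1 entrywise for all sufficiently large n (with m_n = |Σ sign(β_i)| → ∞), then |α_2| ≥ α_1 and α_3 ≥ |α_2|. -/

import Mathlib

open Matrix Filter

/-- The `q×q` exchangeable matrix: `1` on the diagonal, `α` off-diagonal. -/
noncomputable def exchMat (q : ℕ) (α : ℝ) : Matrix (Fin q) (Fin q) ℝ :=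
  Matrix.of fun i j => if i = j then 1 else α

/-- The `r×q` constant matrix with all entries `α`. -/
noncomputable def constMat (r q : ℕ) (α : ℝ) : Matrix (Fin r) (Fin q) ℝ :=
  Matrix.of fun _ _ => α

/-- The block-exchangeable correlation matrix. -/
noncomputable def blockExch (q r : ℕ) (α1 α2 α3 : ℝ) :
    Matrix (Fin q ⊕ Fin r) (Fin q ⊕ Fin r) ℝ :=
  Matrix.fromBlocks (exchMat q α1) (constMat q r α2) (constMat r q α2) (exchMat r α3)

/-- Suppose the block-exchangeable correlation matrix `C^n` (parameters
`α₁, α₃ ∈ [0,1)`, cross-block `α₂`) is positive definite for all `n`, with `q_n → ∞`,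
`r_n = p_n − q_n → ∞` and `m_n = |Σ sign(β_i)| → ∞`.  If `|C^n_{21}(C^n_{11})⁻¹ sign(β_{(1)})| ≥ 1`
entrywise for all sufficiently large `n`, then `|α₂| ≥ α₁` and `α₃ ≥ |α₂|`. -/
lemma exch_mulVec (q : ℕ) (α : ℝ) (x : Fin q → ℝ) (i : Fin q) :
    (exchMat q α *ᵥ x) i = (1 - α) * x i + α * ∑ j, x j := by
  simp only [exchMat, mulVec, dotProduct, of_apply]
  have h : ∀ j : Fin q, (if i = j then (1:ℝ) else α) * x j
      = (if j = i then (1 - α) * x j else 0) + α * x j := by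
    intro j
    rcases eq_or_ne i j with h | h
    · simp [h, eq_comm]; ring
    · simp [h, Ne.symm h]
  rw [Finset.sum_congr rfl fun j _ => h j, Finset.sum_add_distrib,
    Finset.sum_ite_eq' Finset.univ i (fun j => (1 - α) * x j), ← Finset.mul_sum]
  simp

lemma const_mulVec (r q : ℕ) (α : ℝ) (x : Fin q → ℝ) (i : Fin r) :
    (constMat r q α *ᵥ x) i = α * ∑ j, x j := by
  simp [constMat, mulVec, dotProduct, Finset.mul_sum]

lemma exch_posDef (q : ℕ) {α : ℝ} (h0 : 0 ≤ α) (h1 : α < 1) : (exchMat q α).PosDef := by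
  refine posDef_iff_dotProduct_mulVec.mpr ⟨?_, ?_⟩
  · ext i j
    simp [exchMat, IsHermitian, conjTranspose, eq_comm]
  · intro x hx
    have key : dotProduct (star x) (exchMat q α *ᵥ x)
        = (1 - α) * ∑ j, x j ^ 2 + α * (∑ j, x j) ^ 2 := by
      simp only [dotProduct, Pi.star_apply, star_trivial]
      calc ∑ i, x i * (exchMat q α *ᵥ x) i
          = ∑ i, ((1 - α) * x i ^ 2 + (α * ∑ j, x j) * x i) := by
            refine Finset.sum_congr rfl fun i _ => ?_
            rw [exch_mulVec]; ring
        _ = (1 - α) * ∑ j, x j ^ 2 + (α * ∑ j, x j) * ∑ j, x j := by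
            rw [Finset.sum_add_distrib, ← Finset.mul_sum, ← Finset.mul_sum]
        _ = (1 - α) * ∑ j, x j ^ 2 + α * (∑ j, x j) ^ 2 := by ring
    rw [key]
    have hpos : 0 < ∑ j, x j ^ 2 := by
      obtain ⟨i, hi⟩ := Function.ne_iff.mp hx
      exact Finset.sum_pos' (fun j _ => sq_nonneg _)
        ⟨i, Finset.mem_univ i,
          lt_of_le_of_ne (sq_nonneg _) (Ne.symm (pow_ne_zero 2 hi))⟩
    have := mul_pos (by linarith : (0:ℝ) < 1 - α) hpos
    nlinarith [sq_nonneg (∑ j, x j), h0]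

lemma exch_inv_mulVec (q : ℕ) {α : ℝ} (h0 : 0 ≤ α) (h1 : α < 1) (x : Fin q → ℝ) :
    (exchMat q α)⁻¹ *ᵥ x
      = fun i => x i / (1 - α) - α * (∑ j, x j) / ((1 - α) * (1 - α + α * q)) := by
  have hα : (1:ℝ) - α ≠ 0 := by linarith
  have ht : (1:ℝ) - α + α * q ≠ 0 := by
    nlinarith [mul_nonneg h0 (Nat.cast_nonneg (α := ℝ) q)]
  set v : Fin q → ℝ :=
    fun i => x i / (1 - α) - α * (∑ j, x j) / ((1 - α) * (1 - α + α * q)) with hv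
  have hMv : exchMat q α *ᵥ v = x := by
    ext i
    rw [exch_mulVec]
    have hsum : ∑ j, v j = (q : ℝ) * (x i) * 0 + (∑ j, x j) / (1 - α)
        - q * (α * (∑ j, x j) / ((1 - α) * (1 - α + α * q))) := by
      simp only [hv, Finset.sum_sub_distrib, Finset.sum_const, Finset.card_fin,
        nsmul_eq_mul, ← Finset.sum_div]
      ring
    rw [hsum]
    simp only [hv]
    field_simp
    ring
  have hu : IsUnit (exchMat q α).det :=
    isUnit_iff_ne_zero.mpr (exch_posDef q h0 h1).det_pos.ne'
  calc (exchMat q α)⁻¹ *ᵥ x = (exchMat q α)⁻¹ *ᵥ (exchMat q α *ᵥ v) := by rw [hMv]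
    _ = ((exchMat q α)⁻¹ * exchMat q α) *ᵥ v := (mulVec_mulVec _ _ _)
    _ = v := by rw [nonsing_inv_mul _ hu, one_mulVec]
lemma blockExch_ineq (q r : ℕ) {α1 α2 α3 : ℝ} (h0 : 0 ≤ α1) (h1 : α1 < 1)
    (hr : 0 < r) (hpd : (blockExch q r α1 α2 α3).PosDef) :
    α2 ^ 2 * q * r < (1 - α3 + α3 * r) * (1 - α1 + α1 * q) := by
  set t : ℝ := 1 - α1 + α1 * q with htdef
  have ht : 0 < t := by
    have : (0:ℝ) ≤ α1 * q := mul_nonneg h0 (Nat.cast_nonneg q)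
    simp only [htdef]; linarith
  set c : ℝ := -α2 * r / t with hcdef
  set x : Fin q ⊕ Fin r → ℝ := Sum.elim (fun _ => c) (fun _ => 1) with hxdef
  have hx0 : x ≠ 0 := by
    intro h
    have := congrFun h (Sum.inr ⟨0, hr⟩)
    simp [hxdef] at this
  have hmv : blockExch q r α1 α2 α3 *ᵥ x
      = Sum.elim (fun _ => (0:ℝ))
        (fun _ => α2 * ((q : ℝ) * c) + ((1 - α3) * 1 + α3 * ((r : ℝ) * 1))) := by
    rw [blockExch, fromBlocks_mulVec]
    have hl : x ∘ Sum.inl = fun _ : Fin q => c := rfl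
    have hri : x ∘ Sum.inr = fun _ : Fin r => (1:ℝ) := rfl
    rw [hl, hri]
    ext i
    rcases i with i | i
    · simp only [Sum.elim_inl, Pi.add_apply]
      rw [exch_mulVec, const_mulVec]
      simp only [Finset.sum_const, Finset.card_fin, nsmul_eq_mul, mul_one]
      have h5 : (1 - α1) * c + α1 * ((q:ℝ) * c) = t * c := by simp only [htdef]; ring
      rw [h5, hcdef]
      field_simp
      ring
    · simp only [Sum.elim_inr, Pi.add_apply]
      rw [exch_mulVec, const_mulVec]
      simp only [Finset.sum_const, Finset.card_fin, nsmul_eq_mul, mul_one]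
  have hQ := (posDef_iff_dotProduct_mulVec.mp hpd).2 hx0
  have hstar : star x = x := funext fun i => star_trivial _
  rw [hstar, hmv, hxdef, sumElim_dotProduct_sumElim] at hQ
  simp only [dotProduct, Finset.sum_const, Finset.card_fin, nsmul_eq_mul, mul_zero,
    mul_one, one_mul] at hQ
  -- hQ : 0 < q * (c * 0) + r * (α2 * (q * c) + ((1-α3)*1 + α3 * (r*1)))  (roughly)
  have hrR : (0:ℝ) < (r : ℝ) := by exact_mod_cast hr
  have hd : 0 < α2 * ((q:ℝ) * c) + ((1 - α3) * 1 + α3 * ((r : ℝ) * 1)) := by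
    by_contra hcon
    push_neg at hcon
    nlinarith [hQ]
  have hexp : t * (α2 * ((q:ℝ) * c) + ((1 - α3) * 1 + α3 * ((r : ℝ) * 1)))
      = -(α2 ^ 2 * q * r) + (1 - α3 + α3 * r) * t := by
    simp only [hcdef]
    field_simp
  nlinarith [mul_pos ht hd]

lemma cond_ineq {α1 α2 : ℝ} (h0 : 0 ≤ α1) (h1 : α1 < 1) (q r : ℕ) (hr : 0 < r)
    (s : Fin q → ℝ)
    (h : ∀ i : Fin r, 1 ≤ |((constMat r q α2) *ᵥ ((exchMat q α1)⁻¹ *ᵥ s)) i|) :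
    1 - α1 + α1 * q ≤ |α2| * |∑ j, s j| := by
  set t : ℝ := 1 - α1 + α1 * q with htdef
  have ht : 0 < t := by
    have : (0:ℝ) ≤ α1 * q := mul_nonneg h0 (Nat.cast_nonneg q)
    simp only [htdef]; linarith
  have hα : (0:ℝ) < 1 - α1 := by linarith
  have hthis := h ⟨0, hr⟩
  rw [exch_inv_mulVec q h0 h1, const_mulVec] at hthis
  have hsum : ∑ j : Fin q, (s j / (1 - α1) - α1 * (∑ k, s k) / ((1 - α1) * t))
      = (∑ k, s k) / t := by
    rw [Finset.sum_sub_distrib, Finset.sum_const, ← Finset.sum_div,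
      Finset.card_fin, nsmul_eq_mul]
    field_simp
    ring
  rw [hsum, abs_mul, abs_div, abs_of_pos ht] at hthis
  rw [← mul_div_assoc, le_div_iff₀ ht, one_mul] at hthis
  exact hthis

theorem stmt9 (α1 α2 α3 : ℝ) (hα1 : 0 ≤ α1 ∧ α1 < 1) (hα3 : 0 ≤ α3 ∧ α3 < 1)
    (q r m : ℕ → ℕ) (s : ∀ n, Fin (q n) → ℝ)
    (hs : ∀ n i, s n i = 1 ∨ s n i = -1)
    (hm : ∀ n, (m n : ℝ) = |∑ i, s n i|)
    (hq : Tendsto q atTop atTop) (hr : Tendsto r atTop atTop)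
    (hmtop : Tendsto m atTop atTop)
    (hpd : ∀ n, (blockExch (q n) (r n) α1 α2 α3).PosDef)
    (hcond : ∀ᶠ n in atTop, ∀ i : Fin (r n),
      1 ≤ |((constMat (r n) (q n) α2) *ᵥ ((exchMat (q n) α1)⁻¹ *ᵥ s n)) i|) :
    α1 ≤ |α2| ∧ |α2| ≤ α3 := by
  obtain ⟨h10, h11⟩ := hα1
  obtain ⟨h30, h31⟩ := hα3
  have hmq : ∀ n, (m n : ℝ) ≤ q n := by
    intro n
    rw [hm]
    calc |∑ i, s n i| ≤ ∑ i, |s n i| := Finset.abs_sum_le_sum_abs _ _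
      _ = ∑ _i : Fin (q n), (1:ℝ) := by
          refine Finset.sum_congr rfl fun i _ => ?_
          rcases hs n i with h | h <;> simp [h]
      _ = (q n : ℝ) := by simp
  -- a convenient per-n consequence of the entrywise condition
  have hkey : ∀ n, 0 < r n →
      (∀ i : Fin (r n), 1 ≤ |((constMat (r n) (q n) α2) *ᵥ
        ((exchMat (q n) α1)⁻¹ *ᵥ s n)) i|) →
      1 - α1 + α1 * q n ≤ |α2| * m n := by
    intro n hrn hc
    rw [hm]
    exact cond_ineq h10 h11 (q n) (r n) hrn (s n) hc
  constructor
  · -- α1 ≤ |α2|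
    obtain ⟨n, hc, hrn, hqn⟩ :=
      (hcond.and ((hr.eventually_ge_atTop 1).and (hq.eventually_ge_atTop 1))).exists
    have h1 := hkey n (by omega) hc
    have h2 := hmq n
    have h3 : (1:ℝ) ≤ q n := by exact_mod_cast hqn
    have h4 : (0:ℝ) ≤ |α2| := abs_nonneg _
    nlinarith [mul_le_mul_of_nonneg_left h2 h4]
  · -- |α2| ≤ α3
    by_contra hcon
    push_neg at hcon
    have ha2 : 0 < |α2| := lt_of_le_of_lt h30 hcon
    have hrR : Tendsto (fun n => (r n : ℝ)) atTop atTop :=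
      tendsto_natCast_atTop_atTop.comp hr
    obtain ⟨n, hc, hrn, hrbig⟩ :=
      (hcond.and ((hr.eventually_ge_atTop 1).and
        (hrR.eventually_gt_atTop ((1 - α3) / (|α2| - α3))))).exists
    have hrpos : 0 < r n := by omega
    have h1 := hkey n hrpos hc
    have h2 := hmq n
    have hpdn := blockExch_ineq (q n) (r n) h10 h11 hrpos (hpd n)
    have ht : (0:ℝ) < 1 - α1 + α1 * q n := by
      have : (0:ℝ) ≤ α1 * q n := mul_nonneg h10 (Nat.cast_nonneg _)
      linarith
    have hrRn : (0:ℝ) < r n := by exact_mod_cast hrpos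
    -- α2^2 * q n ≥ |α2| * t
    have hq2 : |α2| * (1 - α1 + α1 * q n) ≤ α2 ^ 2 * q n := by
      have hmono : |α2| * m n ≤ |α2| * q n :=
        mul_le_mul_of_nonneg_left h2 (abs_nonneg _)
      calc |α2| * (1 - α1 + α1 * q n) ≤ |α2| * (|α2| * q n) :=
            mul_le_mul_of_nonneg_left (le_trans h1 hmono) (abs_nonneg _)
        _ = α2 ^ 2 * q n := by rw [← mul_assoc, ← sq_abs]; ring
    -- hence |α2| * r < (1 - α3 + α3 * r), i.e. (|α2| - α3) * r < 1 - α3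
    have hlt : (|α2| - α3) * r n < 1 - α3 := by
      have h5 : |α2| * (1 - α1 + α1 * q n) * r n ≤ α2 ^ 2 * q n * r n :=
        mul_le_mul_of_nonneg_right hq2 (le_of_lt hrRn)
      have h6 : |α2| * (1 - α1 + α1 * q n) * r n
          < (1 - α3 + α3 * r n) * (1 - α1 + α1 * q n) := lt_of_le_of_lt h5 hpdn
      nlinarith [h6, ht]
    rw [div_lt_iff₀ (by linarith : (0:ℝ) < |α2| - α3)] at hrbig
    nlinarith [hlt, hrbig]
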